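/- Any concatenation of finitely many MSCs, each of which admits a B_i-bounded linearisation that is complete (all sends matched within the MSC), admits a linearisation that is max_i(B_i)-bounded; hence every HMSC-definable language is existentially B-bounded for B the maximum bound over its finitely many vertex BMSCs. -/

import Mathlib

/-- Events: `snd P Q m` is process `P` sending message `m` to `Q`;
    `rcv P Q m` is process `Q` receiving message `m` from `P`. -/
inductive Ev where
  | snd : ℕ → ℕ → ℕ → Ev
  | rcv : ℕ → ℕ → ℕ → Ev
deriving DecidableEq

/-- Message values of send events on channel (P,Q) in w. -/
def sends (w : List Ev) (P Q : ℕ) : List ℕ :=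
  w.filterMap fun e => match e with
    | .snd p q m => if p = P ∧ q = Q then some m else none
    | _ => none

/-- Message values of receive events on channel (P,Q) in w. -/
def recvs (w : List Ev) (P Q : ℕ) : List ℕ :=
  w.filterMap fun e => match e with
    | .rcv p q m => if p = P ∧ q = Q then some m else none
    | _ => none

def channelCompliant (w : List Ev) : Prop :=
  ∀ u, u <+: w → ∀ P Q, recvs u P Q <+: sends u P Q

def complete (w : List Ev) : Prop :=
  ∀ P Q, sends w P Q = recvs w P Q

def bounded (B : ℕ) (w : List Ev) : Prop :=
  ∀ u, u <+: w → ∀ P Q, (sends u P Q).length ≤ (recvs u P Q).length + B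

def halfDuplex (w : List Ev) : Prop :=
  ∀ u, u <+: w → ∀ P Q,
    sends u P Q = recvs u P Q ∨ sends u Q P = recvs u Q P

/-- Send at position i on channel (P,Q) is matched by receive at position j. -/
def Matches (w : List Ev) (P Q i j : ℕ) : Prop :=
  i < j ∧ j < w.length ∧
  (∃ m, w[i]? = some (.snd P Q m) ∧ w[j]? = some (.rcv P Q m)) ∧
  sends (w.take (i+1)) P Q = recvs (w.take (j+1)) P Q

def IsSendAt (w : List Ev) (P Q i : ℕ) : Prop := ∃ m, w[i]? = some (Ev.snd P Q m)
def IsRcvAt (w : List Ev) (P Q i : ℕ) : Prop := ∃ m, w[i]? = some (Ev.rcv P Q m)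
def MatchedAt (w : List Ev) (P Q i : ℕ) : Prop := ∃ j, Matches w P Q i j

/-- The process performing the event. -/
def actor : Ev → ℕ
  | .snd p _ _ => p
  | .rcv _ q _ => q

/-- Projection of a word onto the events of process X. -/
def proj (w : List Ev) (X : ℕ) : List Ev := w.filter (fun e => actor e == X)

/-- Two words induce the same MSC (same per-process orders; with FIFO matching,
    this determines the matching). -/
def sameMSC (w v : List Ev) : Prop := ∀ X, proj w X = proj v X

/-- Existentially B-bounded: some linearisation of msc(w) is B-bounded. -/
def existBounded (B : ℕ) (w : List Ev) : Prop :=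
  ∃ v, channelCompliant v ∧ sameMSC w v ∧ bounded B v

def isSnd : Ev → Prop
  | .snd _ _ _ => True
  | _ => False

def isRcv : Ev → Prop
  | .rcv _ _ _ => True
  | _ => False

/-- Positions i and j lie in the same block of the block decomposition. -/
def SameBlock (blocks : List (List Ev)) (i j : ℕ) : Prop :=
  ∃ t, ((blocks.take t).flatten).length ≤ i ∧ j < ((blocks.take (t+1)).flatten).length

/-- w is k-synchronisable: some linearisation of msc(w) splits into blocks of
    at most k sends followed by at most k receives, with matched pairs co-located. -/
def kSynchronisable (k : ℕ) (w : List Ev) : Prop :=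
  ∃ blocks : List (List Ev),
    channelCompliant blocks.flatten ∧ sameMSC w blocks.flatten ∧
    (∀ b ∈ blocks, ∃ s r, b = s ++ r ∧ s.length ≤ k ∧ r.length ≤ k ∧
      (∀ e ∈ s, isSnd e) ∧ (∀ e ∈ r, isRcv e)) ∧
    (∀ P Q i j, Matches blocks.flatten P Q i j → SameBlock blocks i j)

/-- One step of the indistinguishability relation ∼. -/
inductive Sim1 : List Ev → List Ev → Prop
  | ss (u v : List Ev) (P Q R S m m' : ℕ) (h : P ≠ R) :
      Sim1 (u ++ Ev.snd P Q m :: Ev.snd R S m' :: v)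
           (u ++ Ev.snd R S m' :: Ev.snd P Q m :: v)
  | rr (u v : List Ev) (P Q R S m m' : ℕ) (h : Q ≠ S) :
      Sim1 (u ++ Ev.rcv P Q m :: Ev.rcv R S m' :: v)
           (u ++ Ev.rcv R S m' :: Ev.rcv P Q m :: v)
  | sr (u v : List Ev) (P Q R S m m' : ℕ) (h1 : P ≠ S) (h2 : P ≠ R ∨ Q ≠ S) :
      Sim1 (u ++ Ev.snd P Q m :: Ev.rcv R S m' :: v)
           (u ++ Ev.rcv R S m' :: Ev.snd P Q m :: v)
  | srSame (u v : List Ev) (P Q m m' : ℕ)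
      (h : (recvs u P Q).length < (sends u P Q).length) :
      Sim1 (u ++ Ev.snd P Q m :: Ev.rcv P Q m' :: v)
           (u ++ Ev.rcv P Q m' :: Ev.snd P Q m :: v)

/-- The indistinguishability relation ∼ (finitely many swaps). -/
def Sim : List Ev → List Ev → Prop := Relation.ReflTransGen Sim1

lemma sends_append (a b : List Ev) (P Q : ℕ) :
    sends (a ++ b) P Q = sends a P Q ++ sends b P Q := by
  simp [sends, List.filterMap_append]

lemma recvs_append (a b : List Ev) (P Q : ℕ) :
    recvs (a ++ b) P Q = recvs a P Q ++ recvs b P Q := by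
  simp [recvs, List.filterMap_append]

lemma prefix_append_cases {u w r : List Ev} (h : u <+: w ++ r) :
    u <+: w ∨ ∃ u', u = w ++ u' ∧ u' <+: r := by
  rcases List.prefix_or_prefix_of_prefix h (List.prefix_append w r) with h1 | h1
  · exact Or.inl h1
  · obtain ⟨u', rfl⟩ := h1
    obtain ⟨t, ht⟩ := h
    exact Or.inr ⟨u', rfl, ⟨t, List.append_cancel_left
      (by rw [← List.append_assoc]; exact ht)⟩⟩

lemma concat_main (ws : List (List Ev)) (Bf : List Ev → ℕ)
    (h : ∀ w ∈ ws, channelCompliant w ∧ complete w ∧ bounded (Bf w) w) :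
    channelCompliant ws.flatten ∧ complete ws.flatten ∧
    bounded ((ws.map Bf).foldr max 0) ws.flatten := by
  induction ws with
  | nil =>
    refine ⟨?_, ?_, ?_⟩
    · intro u hu P Q
      have : u = [] := List.prefix_nil.mp (by simpa using hu)
      subst this; exact List.prefix_refl _
    · intro P Q; rfl
    · intro u hu P Q
      have : u = [] := List.prefix_nil.mp (by simpa using hu)
      subst this; simp [sends, recvs]
  | cons w rest ih =>
    have hw := h w List.mem_cons_self
    obtain ⟨ihc, ihcm, ihb⟩ := ih (fun x hx => h x (List.mem_cons_of_mem _ hx))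
    have hflat : (w :: rest).flatten = w ++ rest.flatten := by simp
    refine ⟨?_, ?_, ?_⟩
    · intro u hu P Q
      rw [hflat] at hu
      rcases prefix_append_cases hu with h1 | ⟨u', rfl, hu'⟩
      · exact hw.1 u h1 P Q
      · rw [sends_append, recvs_append, hw.2.1 P Q]
        obtain ⟨t, ht⟩ := ihc u' hu' P Q
        exact ⟨t, by rw [List.append_assoc, ht]⟩
    · intro P Q
      rw [hflat, sends_append, recvs_append, hw.2.1 P Q, ihcm P Q]
    · intro u hu P Q
      rw [hflat] at hu
      have hmax : (((w :: rest).map Bf).foldr max 0)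
          = max (Bf w) ((rest.map Bf).foldr max 0) := by simp
      rcases prefix_append_cases hu with h1 | ⟨u', rfl, hu'⟩
      · have := hw.2.2 u h1 P Q
        have h2 : Bf w ≤ ((w :: rest).map Bf).foldr max 0 := by
          rw [hmax]; exact le_max_left _ _
        omega
      · have h1 := ihb u' hu' P Q
        have h2 : (rest.map Bf).foldr max 0 ≤ ((w :: rest).map Bf).foldr max 0 := by
          rw [hmax]; exact le_max_right _ _
        rw [sends_append, recvs_append, List.length_append, List.length_append,
          hw.2.1 P Q]
        omega

/-- concatenating complete channel-compliant words, each
    Bᵢ-bounded, yields a channel-compliant word bounded by max Bᵢ; hence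
    every word with the same MSC is existentially (max Bᵢ)-bounded. -/
theorem concat_bounded_linearisations (ws : List (List Ev)) (Bf : List Ev → ℕ)
    (h : ∀ w ∈ ws, channelCompliant w ∧ complete w ∧ bounded (Bf w) w) :
    channelCompliant ws.flatten ∧
    bounded ((ws.map Bf).foldr max 0) ws.flatten ∧
    complete ws.flatten ∧
    (∀ v, sameMSC v ws.flatten → existBounded ((ws.map Bf).foldr max 0) v) := by
  obtain ⟨c, cm, b⟩ := concat_main ws Bf h
  exact ⟨c, b, cm, fun v hv => ⟨ws.flatten, c, hv, b⟩⟩
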